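/- Let φ† be the solution of the ODE φ†'(y) = -φ†(y)²/(α·φ†(y)² + β) with initial condition φ†(-ȳ) = x†, where ȳ > 0 and x† > 0. Then φ† is defined on all of ℝ, is nonincreasing, and satisfies φ†(y) ≥ ( 1/x† + (y + ȳ)/β )^{-1} > 0 for all y ≥ -ȳ; in particular inf_{|y| ≤ ȳ} φ†(y) ≥ ( 1/x† + 2ȳ/β )^{-1}. -/

import Mathlib

open Real Set

/-- the reference manifold `φ†`, solving
`φ†'(y) = -φ†(y)²/(α φ†(y)² + β)` with `φ†(-ȳ) = x†`, is nonincreasing on `ℝ` and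
satisfies `φ†(y) ≥ (1/x† + (y+ȳ)/β)⁻¹ > 0` for `y ≥ -ȳ`; in particular
`inf_{|y| ≤ ȳ} φ†(y) ≥ (1/x† + 2ȳ/β)⁻¹`. -/
theorem barrier_properties (α β ybar xdag : ℝ)
    (hα : 0 < α) (hβ : 0 < β) (hybar : 0 < ybar) (hxdag : 0 < xdag)
    (φ : ℝ → ℝ)
    (hode : ∀ y : ℝ, HasDerivAt φ (-(φ y) ^ 2 / (α * (φ y) ^ 2 + β)) y)
    (hinit : φ (-ybar) = xdag) :
    Antitone φ ∧
    (∀ y : ℝ, -ybar ≤ y →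
      0 < (1 / xdag + (y + ybar) / β)⁻¹ ∧ (1 / xdag + (y + ybar) / β)⁻¹ ≤ φ y) ∧
    (∀ y : ℝ, |y| ≤ ybar → (1 / xdag + 2 * ybar / β)⁻¹ ≤ φ y) := by
  have hd : ∀ y, 0 < α * (φ y) ^ 2 + β := fun y => by positivity
  have hdiff : Differentiable ℝ φ := fun y => (hode y).differentiableAt
  have hcont : Continuous φ := hdiff.continuous
  -- Antitone
  have hanti : Antitone φ := by
    apply antitone_of_deriv_nonpos hdiff
    intro y
    rw [(hode y).deriv]
    apply div_nonpos_of_nonpos_of_nonneg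
    · nlinarith [sq_nonneg (φ y)]
    · exact (hd y).le
  -- positivity of φ everywhere via integrating factor
  set k : ℝ → ℝ := fun y => φ y / (α * (φ y) ^ 2 + β) with hk
  have hkcont : Continuous k := hcont.div (by continuity) (fun y => (hd y).ne')
  set K : ℝ → ℝ := fun y => ∫ t in (-ybar)..y, k t with hK
  have hKderiv : ∀ y, HasDerivAt K (k y) y := fun y =>
    intervalIntegral.integral_hasDerivAt_right (hkcont.intervalIntegrable _ _)
      (hkcont.stronglyMeasurableAtFilter _ _) hkcont.continuousAt
  have hFderiv : ∀ y, HasDerivAt (fun y => φ y * Real.exp (K y)) 0 y := by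
    intro y
    have h1 := (hode y).mul ((hKderiv y).exp)
    convert h1 using 1
    · rfl
    · rfl
    · rfl
    have := (hd y).ne'
    simp only [hk]
    ring
  have hFconst : ∀ y, φ y * Real.exp (K y) = xdag := by
    intro y
    have hF : ∀ y, deriv (fun y => φ y * Real.exp (K y)) y = 0 :=
      fun y => (hFderiv y).deriv
    have := is_const_of_deriv_eq_zero (fun y => (hFderiv y).differentiableAt) hF y (-ybar)
    simpa [hinit, hK, intervalIntegral.integral_same] using this
  have hpos : ∀ y, 0 < φ y := by
    intro y
    have h := hFconst y
    nlinarith [Real.exp_pos (K y), hxdag, mul_pos (Real.exp_pos (K y)) hxdag]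
  -- g = 1/φ - y/β is antitone
  set g : ℝ → ℝ := fun y => (φ y)⁻¹ - y / β with hg
  have hgderiv : ∀ y, HasDerivAt g ((α * (φ y) ^ 2 + β)⁻¹ - 1 / β) y := by
    intro y
    have h1 := ((hode y).inv (hpos y).ne').sub ((hasDerivAt_id y).div_const β)
    convert h1 using 1
    · rfl
    · rfl
    · rfl
    have := (hd y).ne'
    have := (hpos y).ne'
    field_simp
  have hganti : Antitone g := by
    apply antitone_of_deriv_nonpos (fun y => (hgderiv y).differentiableAt)
    intro y
    rw [(hgderiv y).deriv]
    have h2 : (α * (φ y) ^ 2 + β)⁻¹ ≤ β⁻¹ := by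
      apply inv_anti₀ hβ
      nlinarith [sq_nonneg (φ y)]
    rw [one_div]
    linarith
  have hbound : ∀ y : ℝ, -ybar ≤ y →
      0 < (1 / xdag + (y + ybar) / β)⁻¹ ∧ (1 / xdag + (y + ybar) / β)⁻¹ ≤ φ y := by
    intro y hy
    have ha : 0 < 1 / xdag + (y + ybar) / β := by
      have : 0 ≤ (y + ybar) / β := div_nonneg (by linarith) hβ.le
      have : 0 < 1 / xdag := by positivity
      linarith
    refine ⟨by positivity, ?_⟩
    have h1 : g y ≤ g (-ybar) := hganti hy
    have h2 : (φ y)⁻¹ ≤ 1 / xdag + (y + ybar) / β := by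
      simp only [hg, hinit] at h1
      rw [one_div]
      have : (y + ybar) / β = y / β - (-ybar) / β := by ring
      linarith [h1, this ▸ le_refl ((y + ybar) / β)]
    calc (1 / xdag + (y + ybar) / β)⁻¹ ≤ ((φ y)⁻¹)⁻¹ :=
          inv_anti₀ (inv_pos.mpr (hpos y)) h2
      _ = φ y := inv_inv _
  refine ⟨hanti, hbound, ?_⟩
  intro y hy
  rw [abs_le] at hy
  have h1 := (hbound y hy.1).2
  have h2 : (1 / xdag + 2 * ybar / β)⁻¹ ≤ (1 / xdag + (y + ybar) / β)⁻¹ := by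
    apply inv_anti₀
    · have : 0 ≤ (y + ybar) / β := div_nonneg (by linarith) hβ.le
      have : 0 < 1 / xdag := by positivity
      linarith
    · have : (y + ybar) / β ≤ 2 * ybar / β := by
        gcongr
        linarith [hy.2]
      linarith
  linarith
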